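/- arXiv:1510.08291 — 2 statements merged into one kernel-verified Lean document; each statement's English description precedes it below -/
import Mathlib

section
/- If the pair (Φ*, A*) ∈ ℝ^{p×M} × ℝ^{M×K} is a global minimizer of F(Φ, A) := ‖X − Φ·A‖_F² + λ·Σ_{m=1}^M n_Φ(Φ_m)·n_A((A_{m,:})ᵀ) over all Φ ∈ ℝ^{p×M} and A ∈ ℝ^{M×K}, then Z* := Φ*·A* is a global minimizer of G(Z) := ‖X − Z‖_F² + λ·ψ^M(Z) (with values in ℝ≥0∞) over all Z ∈ ℝ^{p×K}. -/
open scoped ENNReal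

/-- The function `ψ^M(Z)`: the infimum of `∑_{m=1}^M n_Φ(Φ_m) · n_A((A_{m,:})ᵀ)`
over all factorisations `Φ · A = Z` with `Φ ∈ ℝ^{p×M}` and `A ∈ ℝ^{M×K}`
(the infimum over the empty set being `+∞`). -/
noncomputable def psi (p K : ℕ) (nPhi : (Fin p → ℝ) → ℝ) (nA : (Fin K → ℝ) → ℝ)
    (M : ℕ) (Z : Matrix (Fin p) (Fin K) ℝ) : ℝ≥0∞ :=
  ⨅ (Φ : Matrix (Fin p) (Fin M) ℝ) (A : Matrix (Fin M) (Fin K) ℝ) (_ : Φ * A = Z),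
    ENNReal.ofReal (∑ m : Fin M, nPhi (fun i => Φ i m) * nA (fun k => A m k))

lemma seminorm_nonneg {q : ℕ} (n : (Fin q → ℝ) → ℝ)
    (hadd : ∀ x y, n (x + y) ≤ n x + n y)
    (hsmul : ∀ (c : ℝ) (x), n (c • x) = |c| * n x)
    (hdef : ∀ x, n x = 0 ↔ x = 0) (x : Fin q → ℝ) : 0 ≤ n x := by
  have h0 : n 0 = 0 := (hdef 0).mpr rfl
  have hneg : n (-x) = n x := by
    have := hsmul (-1) x
    simpa using this
  have := hadd x (-x)
  rw [add_neg_cancel, h0, hneg] at this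
  linarith

lemma mul_iInf_ofReal {lam : ℝ} (hlam : 0 < lam) {ι : Sort*} (f : ι → ℝ≥0∞) :
    ENNReal.ofReal lam * ⨅ i, f i = ⨅ i, ENNReal.ofReal lam * f i :=
  ENNReal.mul_iInf' (fun h => absurd h ENNReal.ofReal_ne_top)
    (fun h => absurd h (by simpa using hlam))

/-- If `(Φ*, A*)` is a global minimizer of
`F(Φ, A) = ‖X − ΦA‖_F² + λ·∑_m n_Φ(Φ_m)·n_A((A_{m,:})ᵀ)`, then `Z* = Φ*·A*` is a global
minimizer of `G(Z) = ‖X − Z‖_F² + λ·ψ^M(Z)`. -/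
theorem factorized_min_gives_psi_min (p K M : ℕ)
    (nPhi : (Fin p → ℝ) → ℝ) (nA : (Fin K → ℝ) → ℝ)
    (hPhi_add : ∀ x y, nPhi (x + y) ≤ nPhi x + nPhi y)
    (hPhi_smul : ∀ (c : ℝ) (x), nPhi (c • x) = |c| * nPhi x)
    (hPhi_def : ∀ x, nPhi x = 0 ↔ x = 0)
    (hA_add : ∀ x y, nA (x + y) ≤ nA x + nA y)
    (hA_smul : ∀ (c : ℝ) (x), nA (c • x) = |c| * nA x)
    (hA_def : ∀ x, nA x = 0 ↔ x = 0)
    (X : Matrix (Fin p) (Fin K) ℝ) (lam : ℝ) (hlam : 0 < lam)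
    (Φs : Matrix (Fin p) (Fin M) ℝ) (As : Matrix (Fin M) (Fin K) ℝ)
    (hmin : ∀ (Φ : Matrix (Fin p) (Fin M) ℝ) (A : Matrix (Fin M) (Fin K) ℝ),
      (∑ i, ∑ k, (X i k - (Φs * As) i k) ^ 2) +
          lam * ∑ m : Fin M, nPhi (fun i => Φs i m) * nA (fun k => As m k) ≤
        (∑ i, ∑ k, (X i k - (Φ * A) i k) ^ 2) +
          lam * ∑ m : Fin M, nPhi (fun i => Φ i m) * nA (fun k => A m k)) :
    ∀ Z : Matrix (Fin p) (Fin K) ℝ,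
      ENNReal.ofReal (∑ i, ∑ k, (X i k - (Φs * As) i k) ^ 2) +
          ENNReal.ofReal lam * psi p K nPhi nA M (Φs * As) ≤
        ENNReal.ofReal (∑ i, ∑ k, (X i k - Z i k) ^ 2) +
          ENNReal.ofReal lam * psi p K nPhi nA M Z := by
  intro Z
  have hnorms : ∀ (Φ : Matrix (Fin p) (Fin M) ℝ) (A : Matrix (Fin M) (Fin K) ℝ),
      0 ≤ ∑ m : Fin M, nPhi (fun i => Φ i m) * nA (fun k => A m k) := fun Φ A =>
    Finset.sum_nonneg fun m _ =>
      mul_nonneg (seminorm_nonneg nPhi hPhi_add hPhi_smul hPhi_def _)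
        (seminorm_nonneg nA hA_add hA_smul hA_def _)
  have hsq : ∀ W : Matrix (Fin p) (Fin K) ℝ,
      0 ≤ ∑ i, ∑ k, (X i k - W i k) ^ 2 := fun W =>
    Finset.sum_nonneg fun i _ => Finset.sum_nonneg fun k _ => sq_nonneg _
  -- Left side is bounded by the value of F at (Φs, As)
  have hL : ENNReal.ofReal (∑ i, ∑ k, (X i k - (Φs * As) i k) ^ 2) +
      ENNReal.ofReal lam * psi p K nPhi nA M (Φs * As) ≤
      ENNReal.ofReal ((∑ i, ∑ k, (X i k - (Φs * As) i k) ^ 2) +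
        lam * ∑ m : Fin M, nPhi (fun i => Φs i m) * nA (fun k => As m k)) := by
    rw [ENNReal.ofReal_add (hsq _) (mul_nonneg hlam.le (hnorms _ _)),
      ENNReal.ofReal_mul hlam.le]
    gcongr
    exact iInf_le_of_le Φs (iInf_le_of_le As (iInf_le _ rfl))
  -- Reduce the right side
  by_cases hT : psi p K nPhi nA M Z = ⊤
  · rw [hT, ENNReal.mul_top (by simpa using hlam)]
    exact le_top
  · have hlam' : (ENNReal.ofReal lam) ≠ 0 := by simpa using hlam
    unfold psi
    conv_rhs => rw [mul_iInf_ofReal hlam, ENNReal.add_iInf]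
    refine le_iInf fun Φ => ?_
    conv_rhs => rw [mul_iInf_ofReal hlam, ENNReal.add_iInf]
    refine le_iInf fun A => ?_
    conv_rhs => rw [mul_iInf_ofReal hlam, ENNReal.add_iInf]
    refine le_iInf fun hZ => ?_
    calc _ ≤ ENNReal.ofReal ((∑ i, ∑ k, (X i k - (Φs * As) i k) ^ 2) +
          lam * ∑ m : Fin M, nPhi (fun i => Φs i m) * nA (fun k => As m k)) := hL
      _ ≤ ENNReal.ofReal ((∑ i, ∑ k, (X i k - (Φ * A) i k) ^ 2) +
          lam * ∑ m : Fin M, nPhi (fun i => Φ i m) * nA (fun k => A m k)) :=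
        ENNReal.ofReal_le_ofReal (hmin Φ A)
      _ = _ := by
        rw [ENNReal.ofReal_add (hsq _) (mul_nonneg hlam.le (hnorms _ _)),
          ENNReal.ofReal_mul hlam.le, hZ]
end

section
/- If Z* ∈ ℝ^{p×K} is a global minimizer of G(Z) := ‖X − Z‖_F² + λ·ψ^M(Z) over all Z ∈ ℝ^{p×K}, and (Φ, A) ∈ ℝ^{p×M} × ℝ^{M×K} satisfies Φ·A = Z* and Σ_{m=1}^M n_Φ(Φ_m)·n_A((A_{m,:})ᵀ) = ψ^M(Z*), then (Φ, A) is a global minimizer of F(Φ', A') := ‖X − Φ'·A'‖_F² + λ·Σ_{m=1}^M n_Φ(Φ'_m)·n_A((A'_{m,:})ᵀ) over all Φ' ∈ ℝ^{p×M} and A' ∈ ℝ^{M×K}. -/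
open scoped ENNReal

/-- If `Z*` is a global minimizer of `G(Z) = ‖X − Z‖_F² + λ·ψ^M(Z)` and `(Φ, A)` satisfies
`Φ·A = Z*` with `∑_m n_Φ(Φ_m)·n_A((A_{m,:})ᵀ) = ψ^M(Z*)`, then `(Φ, A)` is a global
minimizer of `F(Φ', A') = ‖X − Φ'A'‖_F² + λ·∑_m n_Φ(Φ'_m)·n_A((A'_{m,:})ᵀ)`. -/
theorem psi_min_gives_factorized_min (p K M : ℕ)
    (nPhi : (Fin p → ℝ) → ℝ) (nA : (Fin K → ℝ) → ℝ)
    (hPhi_add : ∀ x y, nPhi (x + y) ≤ nPhi x + nPhi y)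
    (hPhi_smul : ∀ (c : ℝ) (x), nPhi (c • x) = |c| * nPhi x)
    (hPhi_def : ∀ x, nPhi x = 0 ↔ x = 0)
    (hA_add : ∀ x y, nA (x + y) ≤ nA x + nA y)
    (hA_smul : ∀ (c : ℝ) (x), nA (c • x) = |c| * nA x)
    (hA_def : ∀ x, nA x = 0 ↔ x = 0)
    (X : Matrix (Fin p) (Fin K) ℝ) (lam : ℝ) (hlam : 0 < lam)
    (Zs : Matrix (Fin p) (Fin K) ℝ)
    (hZmin : ∀ Z : Matrix (Fin p) (Fin K) ℝ,
      ENNReal.ofReal (∑ i, ∑ k, (X i k - Zs i k) ^ 2) +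
          ENNReal.ofReal lam * psi p K nPhi nA M Zs ≤
        ENNReal.ofReal (∑ i, ∑ k, (X i k - Z i k) ^ 2) +
          ENNReal.ofReal lam * psi p K nPhi nA M Z)
    (Φ : Matrix (Fin p) (Fin M) ℝ) (A : Matrix (Fin M) (Fin K) ℝ)
    (hfact : Φ * A = Zs)
    (hattain : ENNReal.ofReal (∑ m : Fin M, nPhi (fun i => Φ i m) * nA (fun k => A m k)) =
      psi p K nPhi nA M Zs) :
    ∀ (Φ' : Matrix (Fin p) (Fin M) ℝ) (A' : Matrix (Fin M) (Fin K) ℝ),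
      (∑ i, ∑ k, (X i k - (Φ * A) i k) ^ 2) +
          lam * ∑ m : Fin M, nPhi (fun i => Φ i m) * nA (fun k => A m k) ≤
        (∑ i, ∑ k, (X i k - (Φ' * A') i k) ^ 2) +
          lam * ∑ m : Fin M, nPhi (fun i => Φ' i m) * nA (fun k => A' m k) := by
  have hnPhi0 : ∀ x, 0 ≤ nPhi x := by
    intro x
    have h0 : nPhi 0 = 0 := by simpa using hPhi_smul 0 x
    have hneg : nPhi (-x) = nPhi x := by simpa using hPhi_smul (-1) x
    have := hPhi_add x (-x)
    simp [h0, hneg] at this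
    linarith
  have hnA0 : ∀ x, 0 ≤ nA x := by
    intro x
    have h0 : nA 0 = 0 := by simpa using hA_smul 0 x
    have hneg : nA (-x) = nA x := by simpa using hA_smul (-1) x
    have := hA_add x (-x)
    simp [h0, hneg] at this
    linarith
  intro Φ' A'
  set S : ℝ := ∑ i, ∑ k, (X i k - (Φ * A) i k) ^ 2 with hS
  set S' : ℝ := ∑ i, ∑ k, (X i k - (Φ' * A') i k) ^ 2 with hS'
  set T : ℝ := ∑ m : Fin M, nPhi (fun i => Φ i m) * nA (fun k => A m k) with hT
  set T' : ℝ := ∑ m : Fin M, nPhi (fun i => Φ' i m) * nA (fun k => A' m k) with hT'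
  have hSnn : 0 ≤ S := Finset.sum_nonneg fun i _ =>
    Finset.sum_nonneg fun k _ => sq_nonneg _
  have hS'nn : 0 ≤ S' := Finset.sum_nonneg fun i _ =>
    Finset.sum_nonneg fun k _ => sq_nonneg _
  have hTnn : 0 ≤ T := Finset.sum_nonneg fun m _ => mul_nonneg (hnPhi0 _) (hnA0 _)
  have hT'nn : 0 ≤ T' := Finset.sum_nonneg fun m _ => mul_nonneg (hnPhi0 _) (hnA0 _)
  have hpsi_le : psi p K nPhi nA M (Φ' * A') ≤ ENNReal.ofReal T' := by
    refine iInf_le_of_le Φ' (iInf_le_of_le A' ?_)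
    exact iInf_le_of_le rfl le_rfl
  have key := hZmin (Φ' * A')
  rw [← hattain] at key
  rw [← hfact] at key
  have key2 : ENNReal.ofReal S + ENNReal.ofReal lam * ENNReal.ofReal T ≤
      ENNReal.ofReal S' + ENNReal.ofReal lam * ENNReal.ofReal T' := by
    calc ENNReal.ofReal S + ENNReal.ofReal lam * ENNReal.ofReal T ≤
        ENNReal.ofReal S' + ENNReal.ofReal lam * psi p K nPhi nA M (Φ' * A') := key
      _ ≤ _ := by gcongr
  have key3 : ENNReal.ofReal (S + lam * T) ≤ ENNReal.ofReal (S' + lam * T') := by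
    rw [ENNReal.ofReal_add hSnn (mul_nonneg hlam.le hTnn),
      ENNReal.ofReal_add hS'nn (mul_nonneg hlam.le hT'nn),
      ENNReal.ofReal_mul hlam.le, ENNReal.ofReal_mul hlam.le]
    exact key2
  have := (ENNReal.ofReal_le_ofReal_iff
    (add_nonneg hS'nn (mul_nonneg hlam.le hT'nn))).mp key3
  linarith
end
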